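/- Let S be a standard ℕ-graded integral domain of Krull dimension 1 whose degree-0 component S_0 is an algebraically closed field, and assume S is a finitely generated S_0-algebra. Then S is isomorphic, as a graded S_0-algebra, to the polynomial ring S_0[t] with t of degree 1. -/

import Mathlib

open Polynomial

/-- Projection of a homogeneous element. -/
lemma stmt4_aux_proj {k S : Type*} [Field k] [CommRing S] [Algebra k S]
    (𝒜 : ℕ → Submodule k S) [GradedAlgebra 𝒜] {i n : ℕ} {b : S} (hb : b ∈ 𝒜 i) :
    GradedRing.proj 𝒜 n b = if i = n then b else 0 := by
  split_ifs with h
  · subst h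
    rw [GradedRing.proj_apply, DirectSum.decompose_of_mem_same 𝒜 hb]
  · rw [GradedRing.proj_apply, DirectSum.decompose_of_mem_ne 𝒜 hb h]

/-- Projection of a polynomial expression in a degree-one element. -/
lemma stmt4_aux_proj_aeval {k S : Type*} [Field k] [CommRing S] [Algebra k S]
    (𝒜 : ℕ → Submodule k S) [GradedAlgebra 𝒜] {x : S} (hx : x ∈ 𝒜 1)
    (p : Polynomial k) (n : ℕ) :
    GradedRing.proj 𝒜 n (Polynomial.aeval x p) = p.coeff n • x ^ n := by
  have hpow : ∀ i : ℕ, x ^ i ∈ 𝒜 i := fun i => by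
    simpa using SetLike.pow_mem_graded i hx
  rw [Polynomial.aeval_eq_sum_range, map_sum]
  have hterm : ∀ i ∈ Finset.range (p.natDegree + 1),
      GradedRing.proj 𝒜 n (p.coeff i • x ^ i)
        = if i = n then p.coeff i • x ^ i else 0 := fun i _ =>
    stmt4_aux_proj 𝒜 (Submodule.smul_mem _ _ (hpow i))
  rw [Finset.sum_congr rfl hterm, Finset.sum_ite_eq' (Finset.range (p.natDegree + 1))]
  split_ifs with h
  · rfl
  · rw [Finset.mem_range, not_lt] at h
    rw [Polynomial.coeff_eq_zero_of_natDegree_lt (by omega), zero_smul]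

/-- A standard ℕ-graded integral domain `S` of Krull dimension 1, finitely
generated over its degree-0 part `S₀ = k` (an algebraically closed field), is isomorphic
as a graded `k`-algebra to the polynomial ring `k[t]` with `t` of degree 1 (the degree-`n`
component of `k[t]` being `k · tⁿ`). -/
theorem stmt_4 {k S : Type*} [Field k] [IsAlgClosed k] [CommRing S] [IsDomain S]
    [Algebra k S] (𝒜 : ℕ → Submodule k S) [GradedAlgebra 𝒜]
    (h0 : 𝒜 0 = Submodule.span k {1})
    (hstd : Algebra.adjoin k (𝒜 1 : Set S) = ⊤)
    (hft : Algebra.FiniteType k S)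
    (hdim : ringKrullDim S = 1) :
    ∃ e : S ≃ₐ[k] Polynomial k,
      ∀ n : ℕ, (𝒜 n).map e.toLinearMap =
        Submodule.span k {(Polynomial.X : Polynomial k) ^ n} := by
  classical
  haveI := hft
  -- the irrelevant ideal is prime
  have hirrP : (HomogeneousIdeal.irrelevant 𝒜).toIdeal.IsPrime := by
    rw [HomogeneousIdeal.toIdeal_irrelevant]
    rw [Ideal.isPrime_iff]
    constructor
    · rw [Ideal.ne_top_iff_one, RingHom.mem_ker, map_one]
      exact one_ne_zero
    · intro a b hab
      rw [RingHom.mem_ker, map_mul] at hab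
      rcases mul_eq_zero.mp hab with h | h
      · exact Or.inl (by rwa [RingHom.mem_ker])
      · exact Or.inr (by rwa [RingHom.mem_ker])
  -- there is a nonzero element of degree 1
  obtain ⟨x, hx1, hx0⟩ : ∃ x : S, x ∈ 𝒜 1 ∧ x ≠ 0 := by
    by_contra h
    push_neg at h
    have hsub : (𝒜 1 : Set S) ⊆ (⊥ : Subalgebra k S) := by
      intro a ha
      have : a = 0 := h a ha
      simp [this]
    have htop : (⊥ : Subalgebra k S) = ⊤ :=
      top_le_iff.mp (hstd ▸ Algebra.adjoin_le hsub)
    have hbij : Function.Bijective (algebraMap k S) := by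
      constructor
      · exact (algebraMap k S).injective
      · intro s
        have : s ∈ (⊥ : Subalgebra k S) := htop ▸ Algebra.mem_top
        exact Algebra.mem_bot.mp this
    have : ringKrullDim S = 0 := by
      rw [← ringKrullDim_eq_of_ringEquiv (RingEquiv.ofBijective (algebraMap k S) hbij)]
      exact ringKrullDim_eq_zero_of_field k
    rw [hdim] at this
    exact one_ne_zero this
  have hpow : ∀ i : ℕ, x ^ i ∈ 𝒜 i := fun i => by
    simpa using SetLike.pow_mem_graded i hx1
  -- x is in the irrelevant ideal
  have hxirr : x ∈ (HomogeneousIdeal.irrelevant 𝒜).toIdeal := by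
    rw [HomogeneousIdeal.mem_iff, HomogeneousIdeal.mem_irrelevant_iff]
    have := stmt4_aux_proj 𝒜 (n := 0) hx1
    simpa using this
  -- key step: every degree-one element is a multiple of x
  have key : ∀ y ∈ 𝒜 1, ∃ c : k, y = c • x := by
    intro y hy
    -- find a maximal ideal avoiding x
    haveI : IsJacobsonRing S := isJacobsonRing_of_finiteType (A := k)
    have hjac : (⊥ : Ideal S).jacobson = ⊥ :=
      IsJacobsonRing.out' ⊥ (Ideal.bot_prime.isRadical)
    have hxnb : x ∉ (⊥ : Ideal S).jacobson := by
      rw [hjac]; simpa using hx0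
    rw [Ideal.jacobson, Ideal.mem_sInf] at hxnb
    push_neg at hxnb
    obtain ⟨M, ⟨-, hMmax⟩, hxM⟩ := hxnb
    haveI : M.IsMaximal := hMmax
    haveI : Algebra.FiniteType k (S ⧸ M) :=
      Algebra.FiniteType.of_surjective (Ideal.Quotient.mkₐ k M)
        (Ideal.Quotient.mkₐ_surjective k M)
    haveI hdom : IsDomain (S ⧸ M) := by infer_instance
    haveI : Algebra.IsIntegral k (S ⧸ M) := by
      letI : Field (S ⧸ M) := Ideal.Quotient.field M
      haveI : Module.Finite k (S ⧸ M) := finite_of_finite_type_of_isJacobsonRing k (S ⧸ M)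
      exact Algebra.IsIntegral.of_finite k (S ⧸ M)
    have hsurj : Function.Surjective (algebraMap k (S ⧸ M)) :=
      IsAlgClosed.algebraMap_bijective_of_isIntegral.2
    set q : S →+* S ⧸ M := Ideal.Quotient.mk M with hq
    have hqalg : ∀ c : k, q (algebraMap k S c) = algebraMap k (S ⧸ M) c := fun c => rfl
    have hqx : q x ≠ 0 := by
      rw [hq, Ne, Ideal.Quotient.eq_zero_iff_mem]
      exact hxM
    obtain ⟨a, ha⟩ := hsurj (q x)
    obtain ⟨b, hb⟩ := hsurj (q y)
    have ha0 : a ≠ 0 := by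
      intro h
      rw [h, map_zero] at ha
      exact hqx ha.symm
    refine ⟨b * a⁻¹, ?_⟩
    by_contra hne
    set c : k := b * a⁻¹ with hcdef
    set z : S := y - c • x with hzdef
    have hz0 : z ≠ 0 := sub_ne_zero.mpr hne
    have hz1 : z ∈ 𝒜 1 := Submodule.sub_mem _ hy (Submodule.smul_mem _ _ hx1)
    have hqz : q z = 0 := by
      rw [hzdef, map_sub, Algebra.smul_def, map_mul, hqalg, ← ha, ← hb, ← map_mul,
        hcdef, mul_assoc, inv_mul_cancel₀ ha0, mul_one, sub_self]
    by_cases hrad : x ∈ (Ideal.span {z}).radical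
    · -- then xⁿ ∈ (z), contradicting q x ≠ 0
      obtain ⟨n, hn⟩ := hrad
      rw [Ideal.mem_span_singleton] at hn
      obtain ⟨s, hs⟩ := hn
      have : (q x) ^ n = 0 := by
        rw [← map_pow, hs, map_mul, hqz, zero_mul]
      exact hqx (pow_eq_zero_iff'.mp this).1
    · -- otherwise get a homogeneous prime strictly between ⊥ and the irrelevant ideal
      rw [Ideal.radical_eq_sInf, Ideal.mem_sInf] at hrad
      push_neg at hrad
      obtain ⟨Q, ⟨hzQ, hQprime⟩, hxQ⟩ := hrad
      have hzQ' : z ∈ Q := hzQ (Ideal.subset_span rfl)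
      set P : HomogeneousIdeal 𝒜 := Q.homogeneousCore 𝒜 with hP
      have hPprime : P.toIdeal.IsPrime := hQprime.homogeneousCore
      have hzP : z ∈ P.toIdeal :=
        HomogeneousIdeal.mem_iff.mpr
          (Ideal.mem_homogeneousCore_of_homogeneous_of_mem ⟨1, hz1⟩ hzQ')
      have hxP : x ∉ P.toIdeal := fun h =>
        hxQ (Ideal.toIdeal_homogeneousCore_le 𝒜 Q h)
      -- P is contained in the irrelevant ideal
      have hPle : P.toIdeal ≤ (HomogeneousIdeal.irrelevant 𝒜).toIdeal := by
        intro a ha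
        rw [HomogeneousIdeal.mem_iff, HomogeneousIdeal.mem_irrelevant_iff]
        by_contra hne0
        have h0mem : (DirectSum.decompose 𝒜 a 0 : S) ∈ P.toIdeal :=
          P.is_homogeneous' 0 ha
        rw [← GradedRing.proj_apply] at h0mem
        have h0comp : GradedRing.proj 𝒜 0 a ∈ 𝒜 0 := by
          rw [GradedRing.proj_apply]; exact SetLike.coe_mem _
        rw [h0, Submodule.mem_span_singleton] at h0comp
        obtain ⟨α, hα⟩ := h0comp
        have hαne : α ≠ 0 := by
          intro h
          rw [h, zero_smul] at hα
          exact hne0 hα.symm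
        have hone : (1 : S) ∈ P.toIdeal := by
          have hmem := P.toIdeal.mul_mem_left (algebraMap k S α⁻¹) h0mem
          have heq : (algebraMap k S α⁻¹) * GradedRing.proj 𝒜 0 a = 1 := by
            rw [← hα, ← Algebra.smul_def, smul_smul, inv_mul_cancel₀ hαne, one_smul]
          rwa [heq] at hmem
        exact hPprime.ne_top (Ideal.eq_top_of_isUnit_mem _ hone isUnit_one)
      -- build a chain of primes of length two
      let c0 : PrimeSpectrum S := ⟨⊥, Ideal.bot_prime⟩
      let c1 : PrimeSpectrum S := ⟨P.toIdeal, hPprime⟩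
      let c2 : PrimeSpectrum S := ⟨(HomogeneousIdeal.irrelevant 𝒜).toIdeal, hirrP⟩
      have h01 : c0 < c1 := by
        show (⊥ : Ideal S) < P.toIdeal
        rw [bot_lt_iff_ne_bot]
        intro h
        rw [h] at hzP
        exact hz0 hzP
      have h12 : c1 < c2 := by
        show P.toIdeal < (HomogeneousIdeal.irrelevant 𝒜).toIdeal
        exact lt_of_le_of_ne hPle (fun h => hxP (h ▸ hxirr))
      let chain : LTSeries (PrimeSpectrum S) :=
        ⟨2, ![c0, c1, c2], by
          intro i
          fin_cases i
          · exact h01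
          · exact h12⟩
      have hlen := Order.LTSeries.length_le_krullDim chain
      have : (2 : WithBot (WithTop ℕ)) ≤ ringKrullDim S := by
        exact_mod_cast hlen
      rw [hdim] at this
      norm_num at this
      exact absurd this (by change ¬ ((2 : ℕ∞) : WithBot ℕ∞) ≤ ((1 : ℕ∞) : WithBot ℕ∞); rw [WithBot.coe_le_coe]; exact_mod_cast (by norm_num : ¬ (2:ℕ) ≤ 1))
  -- hence 𝒜 1 = span {x}
  have hA1 : 𝒜 1 = Submodule.span k {x} := by
    apply le_antisymm
    · intro y hy
      obtain ⟨c, hc⟩ := key y hy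
      exact Submodule.mem_span_singleton.mpr ⟨c, hc.symm⟩
    · rw [Submodule.span_le, Set.singleton_subset_iff]
      exact hx1
  -- the evaluation map k[X] → S at x
  set ψ : Polynomial k →ₐ[k] S := Polynomial.aeval x with hψ
  have hinj : Function.Injective ψ := by
    rw [injective_iff_map_eq_zero]
    intro p hp
    ext n
    have := stmt4_aux_proj_aeval 𝒜 hx1 p n
    rw [show Polynomial.aeval x p = ψ p from rfl, hp, map_zero] at this
    rcases smul_eq_zero.mp this.symm with h | h
    · simpa using h
    · exact absurd h (pow_ne_zero n hx0)
  have hsurjψ : Function.Surjective ψ := by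
    rw [← AlgHom.range_eq_top, hψ, ← Algebra.adjoin_singleton_eq_range_aeval]
    rw [← hstd, hA1]
    exact (Algebra.adjoin_span (R := k) (s := {x})).symm ▸ rfl
  set E : Polynomial k ≃ₐ[k] S := AlgEquiv.ofBijective ψ ⟨hinj, hsurjψ⟩ with hE
  refine ⟨E.symm, fun n => ?_⟩
  have hAn : 𝒜 n = Submodule.span k {x ^ n} := by
    apply le_antisymm
    · intro a ha
      obtain ⟨p, hp⟩ := hsurjψ a
      have h1 : GradedRing.proj 𝒜 n a = a := by
        rw [GradedRing.proj_apply, DirectSum.decompose_of_mem_same 𝒜 ha]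
      have h2 := stmt4_aux_proj_aeval 𝒜 hx1 p n
      rw [show Polynomial.aeval x p = ψ p from rfl, hp, h1] at h2
      exact Submodule.mem_span_singleton.mpr ⟨p.coeff n, h2.symm⟩
    · rw [Submodule.span_le, Set.singleton_subset_iff]
      exact hpow n
  have hEx : E.symm x = Polynomial.X := by
    rw [AlgEquiv.symm_apply_eq]
    exact (show ψ Polynomial.X = x by simp [hψ]).symm
  rw [hAn, Submodule.map_span, Set.image_singleton]
  congr 1
  congr 1
  show E.symm (x ^ n) = Polynomial.X ^ n
  rw [map_pow, hEx]
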